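/- Let B, X, Z be finite types and k : B → X → Z → ℝ a fixed nonnegative kernel with ∑_{x,z} k(b,x,z) = 1 for every b and m(b,z) := ∑_x k(b,x,z) > 0 for every b and z. For a probability vector p on B define F_p(x,z) = (∑_b k(b,x,z)·p(b)) / (∑_b m(b,z)·p(b)) (the conditional of X given Z = z under the joint obtained from prior p and kernel k). Then the following are equivalent: (i) F_p = F_{p'} for all probability vectors p, p' on B (zero variance of the effect-given-cause conditional across all source priors); (ii) there exists c : X → Z → ℝ, c ≥ 0, such that k(b,x,z) = c(x,z)·m(b,z) for all b, x, z (the conditional of X given Z = z and B = b does not depend on b, i.e. X is conditionally independent of B given Z). -/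
import Mathlib


/-- Zero-variance characterization: the conditional F_p(x,z) of effect X given
cause Z derived from the joint J_p(b,x,z) = p(b)·k(b,x,z) is invariant across
all source priors p iff the kernel factorizes as k(b,x,z) = c(x,z)·m(b,z) with
m(b,z) = ∑_x k(b,x,z), i.e. X is conditionally independent of B given Z. -/
theorem zero_variance_iff_conditional_independence
    {B X Z : Type*} [Fintype B] [Fintype X] [Fintype Z]
    (k : B → X → Z → ℝ) (hk0 : ∀ b x z, 0 ≤ k b x z)
    (hk1 : ∀ b, ∑ x, ∑ z, k b x z = 1)
    (hm : ∀ b z, 0 < ∑ x, k b x z) :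
    (∀ p p' : B → ℝ,
        (∀ b, 0 ≤ p b) → (∑ b, p b = 1) →
        (∀ b, 0 ≤ p' b) → (∑ b, p' b = 1) →
        ∀ x z, (∑ b, k b x z * p b) / (∑ b, (∑ x', k b x' z) * p b)
             = (∑ b, k b x z * p' b) / (∑ b, (∑ x', k b x' z) * p' b))
    ↔ (∃ c : X → Z → ℝ, (∀ x z, 0 ≤ c x z) ∧
        ∀ b x z, k b x z = c x z * (∑ x', k b x' z)) := by
  classical
  constructor
  · intro h
    by_cases hB : Nonempty B
    · obtain ⟨b0⟩ := hB
      refine ⟨fun x z => k b0 x z / (∑ x', k b0 x' z),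
        fun x z => div_nonneg (hk0 _ _ _) (hm b0 z).le, fun b x z => ?_⟩
      have hδ : ∀ b1 : B, (∀ b', (0:ℝ) ≤ if b' = b1 then 1 else 0) ∧
          (∑ b', (if b' = b1 then (1:ℝ) else 0)) = 1 := by
        intro b1
        constructor
        · intro b'; split <;> norm_num
        · simp
      have key := h (fun b' => if b' = b then 1 else 0)
        (fun b' => if b' = b0 then 1 else 0)
        (hδ b).1 (hδ b).2 (hδ b0).1 (hδ b0).2 x z
      simp only [mul_ite, mul_one, mul_zero, Finset.sum_ite_eq',
        Finset.mem_univ, if_true] at key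
      rw [div_eq_div_iff (hm b z).ne' (hm b0 z).ne'] at key
      show k b x z = k b0 x z / (∑ x', k b0 x' z) * (∑ x', k b x' z)
      rw [div_mul_eq_mul_div, eq_div_iff (hm b0 z).ne']
      linarith [key]
    · exact ⟨fun _ _ => 0, fun _ _ => le_refl 0,
        fun b => (hB ⟨b⟩).elim⟩
  · rintro ⟨c, hc0, hcf⟩ p p' hp0 hp1 hp0' hp1' x z
    have hS : ∀ (q : B → ℝ), (∀ b, 0 ≤ q b) → (∑ b, q b = 1) →
        0 < ∑ b, (∑ x', k b x' z) * q b := by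
      intro q hq0 hq1
      have : ∃ b, 0 < q b := by
        by_contra hc
        push_neg at hc
        have : ∀ b, q b = 0 := fun b => le_antisymm (hc b) (hq0 b)
        simp [this] at hq1
      obtain ⟨b, hb⟩ := this
      refine Finset.sum_pos' (fun b' _ => mul_nonneg (hm b' z).le (hq0 b'))
        ⟨b, Finset.mem_univ b, mul_pos (hm b z) hb⟩
    have hnum : ∀ (q : B → ℝ), (∑ b, k b x z * q b)
        = c x z * ∑ b, (∑ x', k b x' z) * q b := by
      intro q
      rw [Finset.mul_sum]
      exact Finset.sum_congr rfl fun b _ => by rw [hcf b x z]; ring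
    rw [hnum p, hnum p', mul_div_assoc, mul_div_assoc,
      div_self (hS p hp0 hp1).ne', div_self (hS p' hp0' hp1').ne']
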